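/- Suppose H is a non-empty bipartite graph with parts X, Y in which for every edge xy ∈ E(H) (with x ∈ X, y ∈ Y), the vertex y has at least 2t neighbors z ∈ X such that x and z have at least 2t common neighbors in H. Then H contains P_t □ K₂ as a subgraph. -/
import Mathlib


open SimpleGraph

/-- `F` has an (injective) copy in `G`. -/
def Contains {W V : Type*} (F : SimpleGraph W) (G : SimpleGraph V) : Prop :=
  ∃ f : W → V, Function.Injective f ∧ ∀ a b, F.Adj a b → G.Adj (f a) (f b)

/-- The ladder `P_t □ K₂`. -/
def ladder (t : ℕ) : SimpleGraph (Fin t × Fin 2) :=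
  pathGraph t □ (⊤ : SimpleGraph (Fin 2))

/-- Number of common neighbours of `u` and `v` in `G`. -/
noncomputable def codeg {V : Type*} (G : SimpleGraph V) (u v : V) : ℕ :=
  (G.neighborSet u ∩ G.neighborSet v).ncard

/-- If `H` is a non-empty bipartite graph with parts `X, Y` such that for every edge `xy`
(`x ∈ X`, `y ∈ Y`) the vertex `y` has at least `2t` neighbours `z ∈ X` with
`d(x,z) ≥ 2t`, then `H` contains `P_t □ K₂` as a subgraph. -/
theorem ladder_of_many_high_codegree_neighbours {V : Type*} [Fintype V] (t : ℕ)
    (H : SimpleGraph V) (X Y : Set V) (hdisj : Disjoint X Y)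
    (hbip : ∀ a b, H.Adj a b → (a ∈ X ∧ b ∈ Y) ∨ (a ∈ Y ∧ b ∈ X))
    (hne : H.edgeSet.Nonempty)
    (h : ∀ x ∈ X, ∀ y ∈ Y, H.Adj x y →
      2 * t ≤ {z | z ∈ X ∧ H.Adj y z ∧ 2 * t ≤ codeg H x z}.ncard) :
    Contains (ladder t) H := by
  classical
  rcases Nat.eq_zero_or_pos t with ht0 | ht0
  · subst ht0
    exact ⟨fun a => a.1.elim0, fun a => a.1.elim0, fun a => a.1.elim0⟩
  -- The one-step extension lemma.
  have step : ∀ x ∈ X, ∀ y ∈ Y, H.Adj x y → ∀ S : Set V, S.ncard + 1 < 2 * t →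
      ∃ z w, z ∈ X ∧ w ∈ Y ∧ H.Adj y z ∧ H.Adj x w ∧ H.Adj z w ∧ z ∉ S ∧ w ∉ S ∧ w ≠ z := by
    intro x hx y hy hxy S hS
    have hC := h x hx y hy hxy
    set C := {z | z ∈ X ∧ H.Adj y z ∧ 2 * t ≤ codeg H x z} with hCdef
    have hSfin : S.Finite := Set.toFinite _
    have hzne : (C \ S).Nonempty := by
      rw [Set.nonempty_iff_ne_empty]
      intro hemp
      have hsub : C ⊆ S := by rwa [Set.diff_eq_empty] at hemp
      have := Set.ncard_le_ncard hsub hSfin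
      omega
    obtain ⟨z, hzC, hzS⟩ := hzne
    obtain ⟨hzX, hyz, hcod⟩ := hzC
    have hwne : ((H.neighborSet x ∩ H.neighborSet z) \ (insert z S)).Nonempty := by
      rw [Set.nonempty_iff_ne_empty]
      intro hemp
      have hsub : (H.neighborSet x ∩ H.neighborSet z) ⊆ insert z S := by
        rwa [Set.diff_eq_empty] at hemp
      have h1 := Set.ncard_le_ncard hsub (hSfin.insert z)
      have h2 := Set.ncard_insert_le z S
      have h3 : 2 * t ≤ (H.neighborSet x ∩ H.neighborSet z).ncard := hcod
      omega
    obtain ⟨w, hwD, hwS⟩ := hwne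
    obtain ⟨hwx, hwz⟩ := hwD
    have hadjxw : H.Adj x w := hwx
    have hadjzw : H.Adj z w := hwz
    have hwY : w ∈ Y := by
      rcases hbip x w hadjxw with ⟨_, hw⟩ | ⟨hx', _⟩
      · exact hw
      · exact absurd hx' (Set.disjoint_left.mp hdisj hx)
    exact ⟨z, w, hzX, hwY, hyz, hadjxw, hadjzw, hzS,
      fun hw => hwS (Set.mem_insert_iff.mpr (Or.inr hw)),
      fun hwz' => hwS (by rw [hwz']; exact Set.mem_insert _ _)⟩
  -- Build the two rails greedily.
  have key : ∀ n, 1 ≤ n → n ≤ t → ∃ p q : ℕ → V,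
      (∀ i < n, H.Adj (p i) (q i)) ∧
      (∀ i, i + 1 < n → H.Adj (p i) (p (i + 1)) ∧ H.Adj (q i) (q (i + 1))) ∧
      (∀ i < n, (i % 2 = 0 → p i ∈ X ∧ q i ∈ Y) ∧ (i % 2 = 1 → p i ∈ Y ∧ q i ∈ X)) ∧
      (∀ i < n, ∀ j < n, (p i = p j → i = j) ∧ (q i = q j → i = j) ∧ p i ≠ q j) := by
    intro n
    induction n with
    | zero => omega
    | succ n ih =>
      intro _ hnt
      rcases Nat.eq_zero_or_pos n with hn0 | hn1
      · subst hn0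
        obtain ⟨e, he⟩ := hne
        induction e using Sym2.ind with
        | _ a b =>
          rw [mem_edgeSet] at he
          rcases hbip a b he with ⟨haX, hbY⟩ | ⟨haY, hbX⟩
          · refine ⟨fun _ => a, fun _ => b, ?_, ?_, ?_, ?_⟩
            · intro i _; exact he
            · intro i hi; omega
            · intro i hi
              interval_cases i
              exact ⟨fun _ => ⟨haX, hbY⟩, fun hh => by omega⟩
            · intro i hi j hj
              interval_cases i; interval_cases j
              exact ⟨fun _ => rfl, fun _ => rfl, he.ne⟩
          · refine ⟨fun _ => b, fun _ => a, ?_, ?_, ?_, ?_⟩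
            · intro i _; exact he.symm
            · intro i hi; omega
            · intro i hi
              interval_cases i
              exact ⟨fun _ => ⟨hbX, haY⟩, fun hh => by omega⟩
            · intro i hi j hj
              interval_cases i; interval_cases j
              exact ⟨fun _ => rfl, fun _ => rfl, he.ne'⟩
      · obtain ⟨p, q, hA, hB, hC, hD⟩ := ih hn1 (by omega)
        set m := n - 1 with hmdef
        have hmn : m + 1 = n := by omega
        have hmlt : m < n := by omega
        -- the used set
        set S : Set V := ↑(((Finset.range n).image p) ∪ ((Finset.range n).image q)) with hSdef
        have hpS : ∀ j, j < n → p j ∈ S := by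
          intro j hj
          simp only [hSdef, Finset.coe_union, Set.mem_union, Finset.mem_coe,
            Finset.mem_image, Finset.mem_range]
          exact Or.inl ⟨j, hj, rfl⟩
        have hqS : ∀ j, j < n → q j ∈ S := by
          intro j hj
          simp only [hSdef, Finset.coe_union, Set.mem_union, Finset.mem_coe,
            Finset.mem_image, Finset.mem_range]
          exact Or.inr ⟨j, hj, rfl⟩
        have hScard : S.ncard + 1 < 2 * t := by
          have h1 : S.ncard = (((Finset.range n).image p) ∪ ((Finset.range n).image q)).card :=
            Set.ncard_coe_finset _
          have h2 := Finset.card_union_le ((Finset.range n).image p) ((Finset.range n).image q)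
          have h3 := Finset.card_image_le (s := Finset.range n) (f := p)
          have h4 := Finset.card_image_le (s := Finset.range n) (f := q)
          have h5 : (Finset.range n).card = n := Finset.card_range n
          omega
        have hAm := hA m hmlt
        rcases Nat.even_or_odd m with hmeven | hmodd
        · -- m even : p m ∈ X, q m ∈ Y
          have hm2 : m % 2 = 0 := Nat.even_iff.mp hmeven
          obtain ⟨hpmX, hqmY⟩ := (hC m hmlt).1 hm2
          obtain ⟨z, w, hzX, hwY, hyz, hadjxw, hadjzw, hzS, hwS, hwz⟩ :=
            step (p m) hpmX (q m) hqmY hAm S hScard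
          refine ⟨fun i => if i = n then w else p i, fun i => if i = n then z else q i,
            ?_, ?_, ?_, ?_⟩
          · intro i hi
            by_cases hin : i = n
            · subst hin; simp only [if_pos rfl]; exact hadjzw.symm
            · simp only [if_neg hin]; exact hA i (by omega)
          · intro i hi
            by_cases hin : i + 1 = n
            · have him : i = m := by omega
              have hine : i ≠ n := by omega
              subst him
              simp only [hmn, if_neg hine, if_pos rfl]
              exact ⟨hadjxw, hyz⟩
            · have h1 : i ≠ n := by omega
              have h2 : i + 1 ≠ n := hin
              simp only [if_neg h1, if_neg h2]
              exact hB i (by omega)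
          · intro i hi
            by_cases hin : i = n
            · subst hin
              simp only [if_pos rfl]
              constructor
              · intro hh; omega
              · intro _; exact ⟨hwY, hzX⟩
            · simp only [if_neg hin]
              exact hC i (by omega)
          · intro i hi j hj
            by_cases hin : i = n <;> by_cases hjn : j = n
            · refine ⟨fun _ => by omega, fun _ => by omega, ?_⟩
              simp only [hin, hjn, if_pos]
              exact hwz
            · have hjlt : j < n := by omega
              refine ⟨?_, ?_, ?_⟩
              · intro hh; simp only [hin, hjn, if_pos, if_neg, if_true, reduceIte] at hh
                have := hpS j hjlt; rw [← hh] at this; exact absurd this hwS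
              · intro hh; simp only [hin, hjn, if_pos, if_neg, if_true, reduceIte] at hh
                have := hqS j hjlt; rw [← hh] at this; exact absurd this hzS
              · intro hh; simp only [hin, hjn, if_pos, if_neg, if_true, reduceIte] at hh
                have := hqS j hjlt; rw [← hh] at this; exact absurd this hwS
            · have hilt : i < n := by omega
              refine ⟨?_, ?_, ?_⟩
              · intro hh; simp only [hin, hjn, if_pos, if_neg, if_true, reduceIte] at hh
                have := hpS i hilt; rw [hh] at this; exact absurd this hwS
              · intro hh; simp only [hin, hjn, if_pos, if_neg, if_true, reduceIte] at hh
                have := hqS i hilt; rw [hh] at this; exact absurd this hzS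
              · intro hh; simp only [hin, hjn, if_pos, if_neg, if_true, reduceIte] at hh
                have := hpS i hilt; rw [hh] at this; exact absurd this hzS
            · simp only [if_neg hin, if_neg hjn]
              have := hD i (by omega) j (by omega)
              exact ⟨fun hh => this.1 hh, fun hh => this.2.1 hh, this.2.2⟩
        · -- m odd : p m ∈ Y, q m ∈ X
          have hm2 : m % 2 = 1 := Nat.odd_iff.mp hmodd
          obtain ⟨hpmY, hqmX⟩ := (hC m hmlt).2 hm2
          obtain ⟨z, w, hzX, hwY, hyz, hadjxw, hadjzw, hzS, hwS, hwz⟩ :=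
            step (q m) hqmX (p m) hpmY hAm.symm S hScard
          refine ⟨fun i => if i = n then z else p i, fun i => if i = n then w else q i,
            ?_, ?_, ?_, ?_⟩
          · intro i hi
            by_cases hin : i = n
            · subst hin; simp only [if_pos rfl]; exact hadjzw
            · simp only [if_neg hin]; exact hA i (by omega)
          · intro i hi
            by_cases hin : i + 1 = n
            · have him : i = m := by omega
              have hine : i ≠ n := by omega
              subst him
              simp only [hmn, if_neg hine, if_pos rfl]
              exact ⟨hyz, hadjxw⟩
            · have h1 : i ≠ n := by omega
              have h2 : i + 1 ≠ n := hin
              simp only [if_neg h1, if_neg h2]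
              exact hB i (by omega)
          · intro i hi
            by_cases hin : i = n
            · subst hin
              simp only [if_pos rfl]
              constructor
              · intro _; exact ⟨hzX, hwY⟩
              · intro hh; omega
            · simp only [if_neg hin]
              exact hC i (by omega)
          · intro i hi j hj
            by_cases hin : i = n <;> by_cases hjn : j = n
            · refine ⟨fun _ => by omega, fun _ => by omega, ?_⟩
              simp only [hin, hjn, if_pos]
              exact hwz.symm
            · have hjlt : j < n := by omega
              refine ⟨?_, ?_, ?_⟩
              · intro hh; simp only [hin, hjn, if_pos, if_neg, if_true, reduceIte] at hh
                have := hpS j hjlt; rw [← hh] at this; exact absurd this hzS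
              · intro hh; simp only [hin, hjn, if_pos, if_neg, if_true, reduceIte] at hh
                have := hqS j hjlt; rw [← hh] at this; exact absurd this hwS
              · intro hh; simp only [hin, hjn, if_pos, if_neg, if_true, reduceIte] at hh
                have := hqS j hjlt; rw [← hh] at this; exact absurd this hzS
            · have hilt : i < n := by omega
              refine ⟨?_, ?_, ?_⟩
              · intro hh; simp only [hin, hjn, if_pos, if_neg, if_true, reduceIte] at hh
                have := hpS i hilt; rw [hh] at this; exact absurd this hzS
              · intro hh; simp only [hin, hjn, if_pos, if_neg, if_true, reduceIte] at hh
                have := hqS i hilt; rw [hh] at this; exact absurd this hwS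
              · intro hh; simp only [hin, hjn, if_pos, if_neg, if_true, reduceIte] at hh
                have := hpS i hilt; rw [hh] at this; exact absurd this hwS
            · simp only [if_neg hin, if_neg hjn]
              have := hD i (by omega) j (by omega)
              exact ⟨fun hh => this.1 hh, fun hh => this.2.1 hh, this.2.2⟩
  obtain ⟨p, q, hA, hB, _, hD⟩ := key t ht0 le_rfl
  refine ⟨fun a => if a.2 = 0 then p a.1 else q a.1, ?_, ?_⟩
  · rintro ⟨i, c⟩ ⟨j, d⟩ hfe
    fin_cases c <;> fin_cases d <;>
      simp only [Fin.isValue, if_pos rfl, if_neg (by decide : (1 : Fin 2) ≠ 0)] at hfe ⊢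
    · have := (hD i.val i.isLt j.val j.isLt).1 hfe
      simp [Fin.ext_iff, this]
    · exact absurd hfe (hD i.val i.isLt j.val j.isLt).2.2
    · exact absurd hfe.symm (hD j.val j.isLt i.val i.isLt).2.2
    · have := (hD i.val i.isLt j.val j.isLt).2.1 hfe
      simp [Fin.ext_iff, this]
  · rintro ⟨i, c⟩ ⟨j, d⟩ hadj
    rw [ladder, boxProd_adj] at hadj
    rcases hadj with ⟨hpath, hcd⟩ | ⟨hcd, hij⟩
    · rw [pathGraph_adj] at hpath
      subst hcd
      have hjlt := j.isLt
      have hilt := i.isLt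
      rcases hpath with hij | hij
      · have hij' : (i : ℕ) + 1 = (j : ℕ) := hij
        have hadj' := hB i.val (by omega)
        fin_cases c <;>
          simp only [Fin.isValue, if_pos rfl, if_neg (by decide : (1 : Fin 2) ≠ 0)] <;>
          [exact hij' ▸ hadj'.1; exact hij' ▸ hadj'.2]
      · have hij' : (j : ℕ) + 1 = (i : ℕ) := hij
        have hadj' := hB j.val (by omega)
        fin_cases c <;>
          simp only [Fin.isValue, if_pos rfl, if_neg (by decide : (1 : Fin 2) ≠ 0)] <;>
          [exact (hij' ▸ hadj'.1).symm; exact (hij' ▸ hadj'.2).symm]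
    · subst hij
      have hcdne : c ≠ d := hcd
      have hadi := hA i.val i.isLt
      fin_cases c <;> fin_cases d
      · exact absurd rfl hcdne
      · simp only [Fin.isValue, if_pos rfl, if_neg (by decide : (1 : Fin 2) ≠ 0)]
        exact hadi
      · simp only [Fin.isValue, if_pos rfl, if_neg (by decide : (1 : Fin 2) ≠ 0)]
        exact hadi.symm
      · exact absurd rfl hcdne
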